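/- For every n ∈ ℕ and every set F of natural numbers belonging to S_n ∗ A_3, there exist sets G_1, G_2, G_3 each belonging to S_n (some possibly empty) such that F = G_1 ∪ G_2 ∪ G_3. -/

import Mathlib

/-- `A < B`: every element of `A` is less than every element of `B`. -/
def BlockLt (A B : Finset ℕ) : Prop := ∀ a ∈ A, ∀ b ∈ B, a < b

/-- The Schreier families, defined inductively. -/
def Schreier : ℕ → Set (Finset ℕ)
  | 0 => {F | ∃ i : ℕ, F = {i}}
  | n + 1 => {F | ∃ L : List (Finset ℕ), L ≠ [] ∧
      (∀ A ∈ L, A ∈ Schreier n) ∧ L.Chain' BlockLt ∧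
      (∀ a ∈ L.headI, L.length ≤ a) ∧ F = L.foldr (· ∪ ·) ∅}

/-- The family `S_n ∗ A_3`. -/
def SchreierA3 (n : ℕ) : Set (Finset ℕ) :=
  {F | ∃ L : List (Finset ℕ), L ≠ [] ∧
      (∀ A ∈ L, A.Nonempty ∧ A.card ≤ 3) ∧ L.Chain' BlockLt ∧
      (L.map fun A => sInf (A : Set ℕ)).toFinset ∈ Schreier n ∧
      F = L.foldr (· ∪ ·) ∅}

/-- `Σ_{i∈F} c i • e i` is an `(n, ε)`-basic special convex combination. -/
def IsBasicSCC (n : ℕ) (ε : ℝ) (F : Finset ℕ) (c : ℕ → ℝ) : Prop :=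
  F ∈ Schreier n ∧ (∀ i ∈ F, 0 ≤ c i) ∧ (∑ i ∈ F, c i) = 1 ∧
    ∀ G ⊆ F, G ∈ Schreier (n - 1) → (∑ i ∈ G, c i) < ε

lemma mem_foldr_union (L : List (Finset ℕ)) (x : ℕ) :
    x ∈ L.foldr (· ∪ ·) ∅ ↔ ∃ A ∈ L, x ∈ A := by
  induction L with
  | nil => simp
  | cons A rest ih => simp [Finset.mem_union, ih]

lemma schreier_nonempty : ∀ n (F : Finset ℕ), F ∈ Schreier n → F.Nonempty := by
  intro n
  induction n with
  | zero => rintro F ⟨i, rfl⟩; exact ⟨i, by simp⟩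
  | succ n ih =>
    rintro F ⟨L, hne, hmem, _, _, rfl⟩
    obtain ⟨A, hA⟩ := List.exists_mem_of_ne_nil L hne
    obtain ⟨x, hx⟩ := ih A (hmem A hA)
    exact ⟨x, (mem_foldr_union L x).2 ⟨A, hA, hx⟩⟩

lemma pairwise_cases {α : Type*} {R : α → α → Prop} :
    ∀ {l : List α}, l.Pairwise R → ∀ {a b}, a ∈ l → b ∈ l → a = b ∨ R a b ∨ R b a := by
  intro l
  induction l with
  | nil => intro _ a b ha; simp at ha
  | cons c t ih =>
    intro hl a b ha hb
    obtain ⟨h1, h2⟩ := List.pairwise_cons.1 hl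
    rcases List.mem_cons.1 ha with ha' | ha' <;> rcases List.mem_cons.1 hb with hb' | hb'
    · left; rw [ha', hb']
    · subst ha'; right; left; exact h1 _ hb'
    · subst hb'; right; right; exact h1 _ ha'
    · exact ih h2 ha' hb' 

lemma chain'_blocklt_pairwise :
    ∀ {L : List (Finset ℕ)}, L.Chain' BlockLt → (∀ A ∈ L, A.Nonempty) →
      L.Pairwise BlockLt := by
  intro L
  induction L with
  | nil => intro _ _; exact List.Pairwise.nil
  | cons A rest ih =>
    intro hch hne
    have hch' := (List.isChain_cons.1 hch)
    have hp := ih hch'.2 (fun B hB => hne B (List.mem_cons_of_mem _ hB))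
    refine List.Pairwise.cons ?_ hp
    intro B hB
    -- BlockLt A B for all B ∈ rest
    cases rest with
    | nil => simp at hB
    | cons C t =>
      have hAC : BlockLt A C := hch'.1 C rfl
      rcases List.mem_cons.1 hB with rfl | hB
      · exact hAC
      · have hCB : BlockLt C B := (List.pairwise_cons.1 hp).1 B hB
        obtain ⟨c, hc⟩ := hne C (by simp)
        intro a ha b hb
        exact lt_trans (hAC a ha c hc) (hCB c hc b hb)

lemma foldr_ge_length (L : List (Finset ℕ)) (hch : L.Chain' BlockLt)
    (hne : ∀ A ∈ L, A.Nonempty) (hhead : ∀ a ∈ L.headI, L.length ≤ a) :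
    ∀ x ∈ L.foldr (· ∪ ·) ∅, L.length ≤ x := by
  intro x hx
  obtain ⟨B, hB, hxB⟩ := (mem_foldr_union L x).1 hx
  cases L with
  | nil => simp at hB
  | cons A rest =>
    rcases List.mem_cons.1 hB with rfl | hB
    · exact hhead x hxB
    · have hp := chain'_blocklt_pairwise hch hne
      have hAB : BlockLt A B := (List.pairwise_cons.1 hp).1 B hB
      obtain ⟨a, ha⟩ := hne A (by simp)
      exact le_of_lt (lt_of_le_of_lt (hhead a ha) (hAB a ha x hxB))

lemma schreier_dominate : ∀ (n : ℕ) (M G : Finset ℕ) (φ : ℕ → ℕ),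
    M ∈ Schreier n → G.Nonempty → StrictMonoOn φ ↑G →
    (∀ g ∈ G, φ g ∈ M) → (∀ g ∈ G, φ g ≤ g) → G ∈ Schreier n := by
  intro n
  induction n with
  | zero =>
    rintro M G φ ⟨i, rfl⟩ ⟨g, hg⟩ hmono hmem hle
    refine ⟨g, ?_⟩
    ext x
    simp only [Finset.mem_singleton]
    constructor
    · intro hx
      by_contra hne
      have h1 : φ x = i := by simpa using hmem x hx
      have h2 : φ g = i := by simpa using hmem g hg
      rcases lt_or_gt_of_ne hne with h | h
      · exact absurd (hmono hx hg h) (by omega)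
      · exact absurd (hmono hg hx h) (by omega)
    · rintro rfl; exact hg
  | succ n ih =>
    rintro M G φ ⟨L, hLne, hLmem, hLch, hLhead, rfl⟩ hGne hmono hmem hle
    -- inner induction on L
    have key : ∀ (L : List (Finset ℕ)), (∀ A ∈ L, A ∈ Schreier n) → L.Chain' BlockLt →
        ∀ (G : Finset ℕ), G.Nonempty → StrictMonoOn φ ↑G → (∀ g ∈ G, φ g ≤ g) →
        (∀ g ∈ G, φ g ∈ L.foldr (· ∪ ·) ∅) →
        ∃ L' : List (Finset ℕ), L' ≠ [] ∧ (∀ A ∈ L', A ∈ Schreier n) ∧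
          L'.Chain' BlockLt ∧ L'.length ≤ L.length ∧ G = L'.foldr (· ∪ ·) ∅ := by
      clear hGne hmem hmono hle hLne hLhead G
      intro L
      induction L with
      | nil =>
        rintro _ _ G ⟨g, hg⟩ _ _ hmem
        simpa using hmem g hg
      | cons A rest ihL =>
        intro hmemL hch G hGne hmonoG hle hmemG
        classical
        set GA := G.filter (fun g => φ g ∈ A) with hGA
        set Gr := G.filter (fun g => φ g ∉ A) with hGr
        have hunion : G = GA ∪ Gr := by
          ext x; simp [hGA, hGr]; tauto
        have hrest_ne : ∀ B ∈ rest, B.Nonempty :=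
          fun B hB => schreier_nonempty n B (hmemL B (List.mem_cons_of_mem _ hB))
        have hLne' : ∀ B ∈ A :: rest, B.Nonempty :=
          fun B hB => schreier_nonempty n B (hmemL B hB)
        by_cases hGrE : Gr = ∅
        · -- G = GA, maps into A
          have hGeq : G = GA := by
            rw [hunion, hGrE, Finset.union_empty]
          have hGS : G ∈ Schreier n := by
            refine ih A G φ (hmemL A (by simp)) hGne hmonoG ?_ hle
            intro g hg
            have : g ∈ GA := hGeq ▸ hg
            exact (Finset.mem_filter.1 this).2
          exact ⟨[G], by simp, by simpa using hGS, List.isChain_singleton _, by simp, by simp⟩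
        · have hGrNe : Gr.Nonempty := Finset.nonempty_iff_ne_empty.2 hGrE
          have hGrsub : ↑Gr ⊆ (↑G : Set ℕ) := by
            intro x hx; exact Finset.mem_coe.2 (Finset.mem_of_mem_filter _ (Finset.mem_coe.1 hx))
          have hmemGr : ∀ g ∈ Gr, φ g ∈ rest.foldr (· ∪ ·) ∅ := by
            intro g hg
            have hg' := Finset.mem_filter.1 hg
            have := hmemG g hg'.1
            simp only [List.foldr_cons, Finset.mem_union] at this
            tauto
          obtain ⟨L'', hL''ne, hL''mem, hL''ch, hL''len, hL''eq⟩ :=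
            ihL (fun B hB => hmemL B (List.mem_cons_of_mem _ hB)) (List.isChain_cons.1 hch).2
              Gr hGrNe (hmonoG.mono hGrsub) (fun g hg => hle g (hGrsub hg)) hmemGr
          by_cases hGAE : GA = ∅
          · refine ⟨L'', hL''ne, hL''mem, hL''ch, by simpa using Nat.le_succ_of_le hL''len, ?_⟩
            rw [hunion, hGAE, Finset.empty_union, hL''eq]
          · have hGANe : GA.Nonempty := Finset.nonempty_iff_ne_empty.2 hGAE
            have hGAsub : ↑GA ⊆ (↑G : Set ℕ) := by
              intro x hx; exact Finset.mem_coe.2 (Finset.mem_of_mem_filter _ (Finset.mem_coe.1 hx))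
            have hGAS : GA ∈ Schreier n := by
              refine ih A GA φ (hmemL A (by simp)) hGANe (hmonoG.mono hGAsub) ?_
                (fun g hg => hle g (hGAsub hg))
              intro g hg; exact (Finset.mem_filter.1 hg).2
            -- BlockLt GA B for any B with B ⊆ Gr
            have hblock : ∀ a ∈ GA, ∀ b ∈ Gr, a < b := by
              intro a ha b hb
              have ha' := Finset.mem_filter.1 ha
              have hφb := hmemGr b hb
              obtain ⟨B, hB, hφbB⟩ := (mem_foldr_union rest (φ b)).1 hφb
              have hp := chain'_blocklt_pairwise hch hLne'
              have hAB : BlockLt A B := (List.pairwise_cons.1 hp).1 B hB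
              have hφab : φ a < φ b := hAB _ ha'.2 _ hφbB
              by_contra hab
              push_neg at hab
              rcases eq_or_lt_of_le hab with rfl | hba
              · exact absurd rfl (ne_of_lt hφab)
              · exact absurd (hmonoG (hGrsub (Finset.mem_coe.2 hb))
                  (hGAsub (Finset.mem_coe.2 ha)) hba) (by omega)
            refine ⟨GA :: L'', by simp, ?_, ?_, by simpa using Nat.succ_le_succ hL''len, ?_⟩
            · intro B hB
              rcases List.mem_cons.1 hB with rfl | hB
              · exact hGAS
              · exact hL''mem B hB
            · refine List.isChain_cons.2 ⟨?_, hL''ch⟩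
              intro B hB
              intro a ha b hb
              refine hblock a ha b ?_
              have : b ∈ L''.foldr (· ∪ ·) ∅ := by
                refine (mem_foldr_union _ _).2 ⟨B, ?_, hb⟩
                exact List.mem_of_mem_head? hB
              rwa [← hL''eq] at this
            · simp only [List.foldr_cons]
              rw [hunion, hL''eq]
    obtain ⟨L', hL'ne, hL'mem, hL'ch, hL'len, hL'eq⟩ :=
      key L hLmem hLch G hGne hmono hle hmem
    refine ⟨L', hL'ne, hL'mem, hL'ch, ?_, hL'eq⟩
    intro a ha
    have haG : a ∈ G := by
      rw [hL'eq]
      obtain ⟨A0, T, rfl⟩ := List.exists_cons_of_ne_nil hL'ne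
      exact (mem_foldr_union _ _).2 ⟨A0, by simp, ha⟩
    have hφa : φ a ∈ L.foldr (· ∪ ·) ∅ := hmem a haG
    have h1 : L.length ≤ φ a := foldr_ge_length L hLch
      (fun A hA => schreier_nonempty n A (hLmem A hA)) hLhead (φ a) hφa
    exact le_trans hL'len (le_trans h1 (hle a haG))

noncomputable def el1 (A : Finset ℕ) : ℕ := sInf (↑A : Set ℕ)
noncomputable def blk2 (A : Finset ℕ) : Finset ℕ := A.erase (el1 A)
noncomputable def el2 (A : Finset ℕ) : ℕ := sInf (↑(blk2 A) : Set ℕ)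
noncomputable def blk3 (A : Finset ℕ) : Finset ℕ := (blk2 A).erase (el2 A)
noncomputable def el3 (A : Finset ℕ) : ℕ := sInf (↑(blk3 A) : Set ℕ)

lemma el1_mem {A : Finset ℕ} (h : A.Nonempty) : el1 A ∈ A :=
  Nat.sInf_mem (Finset.coe_nonempty.2 h)

lemma el1_le {A : Finset ℕ} {x : ℕ} (hx : x ∈ A) : el1 A ≤ x :=
  Nat.sInf_le hx

lemma blk2_nonempty {A : Finset ℕ} (h : 2 ≤ A.card) : (blk2 A).Nonempty := by
  have hA0 : 0 < A.card := by omega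
  have hA : A.Nonempty := Finset.card_pos.1 hA0
  have h1 := Finset.card_erase_of_mem (el1_mem hA)
  have h2 : 0 < (blk2 A).card := by unfold blk2; omega
  exact Finset.card_pos.1 h2

lemma el2_mem_blk2 {A : Finset ℕ} (h : 2 ≤ A.card) : el2 A ∈ blk2 A :=
  Nat.sInf_mem (Finset.coe_nonempty.2 (blk2_nonempty h))

lemma el2_mem {A : Finset ℕ} (h : 2 ≤ A.card) : el2 A ∈ A :=
  Finset.mem_of_mem_erase (el2_mem_blk2 h)

lemma blk3_nonempty {A : Finset ℕ} (h : 3 ≤ A.card) : (blk3 A).Nonempty := by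
  have hA0 : 0 < A.card := by omega
  have hA : A.Nonempty := Finset.card_pos.1 hA0
  have h1 := Finset.card_erase_of_mem (el1_mem hA)
  have h2 := Finset.card_erase_of_mem (el2_mem_blk2 (by omega : 2 ≤ A.card))
  have h3 : 0 < (blk3 A).card := by unfold blk3 blk2 at *; omega
  exact Finset.card_pos.1 h3

lemma el3_mem_blk3 {A : Finset ℕ} (h : 3 ≤ A.card) : el3 A ∈ blk3 A :=
  Nat.sInf_mem (Finset.coe_nonempty.2 (blk3_nonempty h))

lemma el3_mem {A : Finset ℕ} (h : 3 ≤ A.card) : el3 A ∈ A :=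
  Finset.mem_of_mem_erase (Finset.mem_of_mem_erase (el3_mem_blk3 h))

lemma mem_M (L : List (Finset ℕ)) (x : ℕ) :
    x ∈ (L.map fun A => sInf (A : Set ℕ)).toFinset ↔ ∃ A ∈ L, el1 A = x := by
  simp only [List.mem_toFinset, List.mem_map, List.bind_eq_flatMap, List.mem_flatMap,
    List.singleton, List.mem_singleton, pure]
  constructor
  · rintro ⟨s, ⟨A, hA, rfl⟩, h⟩
    exact ⟨A, hA, h⟩
  · rintro ⟨A, hA, h⟩
    exact ⟨↑A, ⟨A, hA, rfl⟩, h⟩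

lemma mem_split {A : Finset ℕ} {x : ℕ} (hcard : A.card ≤ 3) (hx : x ∈ A) :
    x = el1 A ∨ (2 ≤ A.card ∧ x = el2 A) ∨ (3 ≤ A.card ∧ x = el3 A) := by
  by_cases h1 : x = el1 A
  · exact Or.inl h1
  have hx2 : x ∈ blk2 A := Finset.mem_erase.2 ⟨h1, hx⟩
  have hA : A.Nonempty := ⟨x, hx⟩
  have hc1 := Finset.card_erase_of_mem (el1_mem hA)
  have hc2' : 1 ≤ (blk2 A).card := Finset.card_pos.2 ⟨x, hx2⟩
  have hcard2 : 2 ≤ A.card := by unfold blk2 at *; omega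
  by_cases h2 : x = el2 A
  · exact Or.inr (Or.inl ⟨hcard2, h2⟩)
  have hx3 : x ∈ blk3 A := Finset.mem_erase.2 ⟨h2, hx2⟩
  have hc2 := Finset.card_erase_of_mem (el2_mem_blk2 hcard2)
  have hc3' : 1 ≤ (blk3 A).card := Finset.card_pos.2 ⟨x, hx3⟩
  have hcard3 : 3 ≤ A.card := by unfold blk3 blk2 at *; omega
  have hc3 : (blk3 A).card ≤ 1 := by unfold blk3 blk2 at *; omega
  exact Or.inr (Or.inr ⟨hcard3, Finset.card_le_one.1 hc3 _ hx3 _ (el3_mem_blk3 hcard3)⟩)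

/-- Every set in `S_n ∗ A_3` is the union of at most three sets in `S_n`
    (some possibly empty). -/
theorem stmt_0 (n : ℕ) (F : Finset ℕ) (hF : F ∈ SchreierA3 n) :
    ∃ G₁ G₂ G₃ : Finset ℕ,
      (G₁ ∈ Schreier n ∨ G₁ = ∅) ∧ (G₂ ∈ Schreier n ∨ G₂ = ∅) ∧
      (G₃ ∈ Schreier n ∨ G₃ = ∅) ∧ F = G₁ ∪ G₂ ∪ G₃ := by
  classical
  obtain ⟨L, hLne, hL3, hch, hM, rfl⟩ := hF
  set M : Finset ℕ := (L.map fun A => sInf (A : Set ℕ)).toFinset with hMdef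
  have hne' : ∀ A ∈ L, A.Nonempty := fun A hA => (hL3 A hA).1
  have hp := chain'_blocklt_pairwise hch hne'
  have hMmem : ∀ A ∈ L, el1 A ∈ M := by
    intro A hA
    rw [hMdef, mem_M]
    exact ⟨A, hA, rfl⟩
  -- the projection map
  set φ : ℕ → ℕ := fun x => M.sup (fun m => if m ≤ x then m else 0) with hφdef
  have hφle : ∀ x, φ x ≤ x := by
    intro x
    refine Finset.sup_le ?_
    intro m _
    split <;> omega
  have hφ : ∀ A ∈ L, ∀ x ∈ A, φ x = el1 A := by
    intro A hA x hx
    refine le_antisymm ?_ ?_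
    · refine Finset.sup_le ?_
      intro m hm
      rw [hMdef, mem_M] at hm
      obtain ⟨B, hB, rfl⟩ := hm
      split
      · rename_i hle
        rcases pairwise_cases hp hA hB with heq | hAB | hBA
        · rw [heq]
        · have : x < el1 B := hAB x hx _ (el1_mem (hne' B hB))
          omega
        · exact le_of_lt (hBA _ (el1_mem (hne' B hB)) _ (el1_mem (hne' A hA)))
      · omega
    · have h' : (if el1 A ≤ x then el1 A else 0) ≤ φ x :=
        Finset.le_sup (f := fun m => if m ≤ x then m else 0) (hMmem A hA)
      rwa [if_pos (el1_le hx)] at h'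
  have hcore : ∀ A ∈ L, ∀ B ∈ L, ∀ x ∈ A, ∀ y ∈ B, x < y → A = B ∨ el1 A < el1 B := by
    intro A hA B hB x hx y hy hxy
    rcases pairwise_cases hp hA hB with heq | hAB | hBA
    · exact Or.inl heq
    · exact Or.inr (hAB _ (el1_mem (hne' A hA)) _ (el1_mem (hne' B hB)))
    · exact absurd (hBA y hy x hx) (by omega)
  set G₂ : Finset ℕ := ((L.filter fun A => 2 ≤ A.card).map el2).toFinset with hG2def
  set G₃ : Finset ℕ := ((L.filter fun A => 3 ≤ A.card).map el3).toFinset with hG3def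
  have hG2mem : ∀ x, x ∈ G₂ ↔ ∃ A ∈ L, 2 ≤ A.card ∧ el2 A = x := by
    intro x
    simp only [hG2def, List.mem_toFinset, List.mem_map, List.mem_filter,
      decide_eq_true_eq]
    constructor
    · rintro ⟨A, ⟨hA, hc⟩, rfl⟩; exact ⟨A, hA, hc, rfl⟩
    · rintro ⟨A, hA, hc, rfl⟩; exact ⟨A, ⟨hA, hc⟩, rfl⟩
  have hG3mem : ∀ x, x ∈ G₃ ↔ ∃ A ∈ L, 3 ≤ A.card ∧ el3 A = x := by
    intro x
    simp only [hG3def, List.mem_toFinset, List.mem_map, List.mem_filter,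
      decide_eq_true_eq]
    constructor
    · rintro ⟨A, ⟨hA, hc⟩, rfl⟩; exact ⟨A, hA, hc, rfl⟩
    · rintro ⟨A, hA, hc, rfl⟩; exact ⟨A, ⟨hA, hc⟩, rfl⟩
  have hMmem' : ∀ x, x ∈ M ↔ ∃ A ∈ L, el1 A = x := by
    intro x
    rw [hMdef, mem_M]
  refine ⟨M, G₂, G₃, Or.inl hM, ?_, ?_, ?_⟩
  · -- G₂
    rcases eq_or_ne G₂ ∅ with h | h
    · exact Or.inr h
    refine Or.inl (schreier_dominate n M G₂ φ hM (Finset.nonempty_iff_ne_empty.2 h) ?_ ?_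
      (fun g _ => hφle g))
    · intro x hx y hy hxy
      obtain ⟨A, hA, hcA, rfl⟩ := (hG2mem x).1 (Finset.mem_coe.1 hx)
      obtain ⟨B, hB, hcB, rfl⟩ := (hG2mem y).1 (Finset.mem_coe.1 hy)
      rw [hφ A hA _ (el2_mem hcA), hφ B hB _ (el2_mem hcB)]
      rcases hcore A hA B hB _ (el2_mem hcA) _ (el2_mem hcB) hxy with heq | hlt
      · subst heq; omega
      · exact hlt
    · intro g hg
      obtain ⟨A, hA, hcA, rfl⟩ := (hG2mem g).1 hg
      rw [hφ A hA _ (el2_mem hcA)]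
      exact hMmem A hA
  · -- G₃
    rcases eq_or_ne G₃ ∅ with h | h
    · exact Or.inr h
    refine Or.inl (schreier_dominate n M G₃ φ hM (Finset.nonempty_iff_ne_empty.2 h) ?_ ?_
      (fun g _ => hφle g))
    · intro x hx y hy hxy
      obtain ⟨A, hA, hcA, rfl⟩ := (hG3mem x).1 (Finset.mem_coe.1 hx)
      obtain ⟨B, hB, hcB, rfl⟩ := (hG3mem y).1 (Finset.mem_coe.1 hy)
      rw [hφ A hA _ (el3_mem hcA), hφ B hB _ (el3_mem hcB)]
      rcases hcore A hA B hB _ (el3_mem hcA) _ (el3_mem hcB) hxy with heq | hlt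
      · subst heq; omega
      · exact hlt
    · intro g hg
      obtain ⟨A, hA, hcA, rfl⟩ := (hG3mem g).1 hg
      rw [hφ A hA _ (el3_mem hcA)]
      exact hMmem A hA
  · -- union
    ext x
    rw [mem_foldr_union]
    simp only [Finset.mem_union]
    constructor
    · rintro ⟨A, hA, hxA⟩
      rcases mem_split (hL3 A hA).2 hxA with h1 | ⟨hc, h2⟩ | ⟨hc, h3⟩
      · exact Or.inl (Or.inl ((hMmem' x).2 ⟨A, hA, h1.symm⟩))
      · exact Or.inl (Or.inr ((hG2mem x).2 ⟨A, hA, hc, h2.symm⟩))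
      · exact Or.inr ((hG3mem x).2 ⟨A, hA, hc, h3.symm⟩)
    · rintro ((h | h) | h)
      · obtain ⟨A, hA, rfl⟩ := (hMmem' x).1 h
        exact ⟨A, hA, el1_mem (hne' A hA)⟩
      · obtain ⟨A, hA, hc, rfl⟩ := (hG2mem x).1 h
        exact ⟨A, hA, el2_mem hc⟩
      · obtain ⟨A, hA, hc, rfl⟩ := (hG3mem x).1 h
        exact ⟨A, hA, el3_mem hc⟩
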